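/- The Rayleigh-Jeans distribution maximizes entropy under constraints: among all positive w : Fin M → ℝ with Σ_j w_j = N and Σ_j β_j w_j = E, the entropy S[w] = Σ_j log w_j attains its maximum at w_j = T/(β_j − μ) provided T > 0, μ < min_j β_j, Σ_j T/(β_j − μ) = N and Σ_j β_j T/(β_j − μ) = E. More precisely, for any admissible w, S[w] ≤ S[w^RJ]. -/

import Mathlib

open Finset

/-- The Rayleigh-Jeans distribution maximizes the entropy `S[w] = ∑ j, log (w j)`
among positive distributions with prescribed particle number `N` and energy `E`. -/
theorem RJ_maximizes_entropy
    (M : ℕ) (hM : 1 ≤ M) (β : Fin M → ℝ) (N E T μ : ℝ)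
    (hT : 0 < T) (hμ : ∀ j, μ < β j)
    (hNRJ : ∑ j, T / (β j - μ) = N)
    (hERJ : ∑ j, β j * (T / (β j - μ)) = E)
    (w : Fin M → ℝ) (hw : ∀ j, 0 < w j)
    (hNw : ∑ j, w j = N) (hEw : ∑ j, β j * w j = E) :
    ∑ j, Real.log (w j) ≤ ∑ j, Real.log (T / (β j - μ)) := by
  have hpos : ∀ j, (0:ℝ) < T / (β j - μ) := fun j =>
    div_pos hT (sub_pos.2 (hμ j))
  have key : ∀ j, Real.log (w j) - Real.log (T / (β j - μ)) ≤
      (w j - T / (β j - μ)) / (T / (β j - μ)) := by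
    intro j
    rw [← Real.log_div (hw j).ne' (hpos j).ne']
    have h1 : 0 < w j / (T / (β j - μ)) := div_pos (hw j) (hpos j)
    have := Real.log_le_sub_one_of_pos h1
    have h2 : (w j - T / (β j - μ)) / (T / (β j - μ)) =
        w j / (T / (β j - μ)) - 1 := by
      have hb : β j - μ ≠ 0 := (sub_pos.2 (hμ j)).ne'
      field_simp
    linarith [h2 ▸ this]
  have hsum : ∑ j, (w j - T / (β j - μ)) / (T / (β j - μ)) = 0 := by
    have : ∀ j, (w j - T / (β j - μ)) / (T / (β j - μ)) =
        ((β j * w j - μ * w j) - (β j * (T / (β j - μ)) - μ * (T / (β j - μ)))) / T := by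
      intro j
      have hb : β j - μ ≠ 0 := (sub_pos.2 (hμ j)).ne'
      field_simp
    rw [Finset.sum_congr rfl fun j _ => this j, ← Finset.sum_div]
    rw [Finset.sum_sub_distrib]
    simp only [Finset.sum_sub_distrib, ← Finset.mul_sum]
    rw [hEw, hNw, hNRJ, hERJ]
    simp
  have := Finset.sum_le_sum fun j (_ : j ∈ Finset.univ) => key j
  rw [Finset.sum_sub_distrib, hsum] at this
  linarith
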